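/- In the static placement model with C = 1: there exist constants δ > 0, γ > 0 and n₀ (depending only on α, c₁, c₂) such that for every n ≥ n₀ and every subset S of the n nodes, with probability at least 1 − n^{−γ}, at least δ·n cells of attractiveness 2 are chosen by no node of S in the round. -/

import Mathlib

open scoped Classical
open Finset

/-- Probability that a single node chooses cell `v`: proportional to the
attractiveness `a v`. -/
noncomputable def cellProb {N : ℕ} (a : Fin N → ℕ) (v : Fin N) : ℝ :=
  (a v : ℝ) / ∑ w : Fin N, (a w : ℝ)

/-- Probability of an event `E` about the (independent) cell choices of the
`n` nodes in one round. -/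
noncomputable def roundProb (n : ℕ) {N : ℕ} (a : Fin N → ℕ)
    (E : Set (Fin n → Fin N)) : ℝ :=
  ∑ f : Fin n → Fin N, E.indicator (fun g => ∏ i : Fin n, cellProb a (g i)) f

/-- Expectation of a random variable `X` of the cell choices of the `n`
nodes in one round. -/
noncomputable def roundExp (n : ℕ) {N : ℕ} (a : Fin N → ℕ)
    (X : (Fin n → Fin N) → ℝ) : ℝ :=
  ∑ f : Fin n → Fin N, (∏ i : Fin n, cellProb a (f i)) * X f

/-- The static placement model: `N = ⌈C·n⌉` cells, each with an integer
attractiveness in `[2, (C·n)^(1/α)]`, such that the number of cells of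
attractiveness `d` is between `c₁·C·n/d^α` and `c₂·C·n/d^α`. -/
structure PlacementModel (C α c₁ c₂ : ℝ) (n N : ℕ) (a : Fin N → ℕ) : Prop where
  hC : 1 ≤ C
  hα : 2 < α
  hc₁ : 0 < c₁
  hc₁₂ : c₁ ≤ c₂
  hn : 0 < n
  hN : N = ⌈C * (n : ℝ)⌉₊
  ha_lb : ∀ v, 2 ≤ a v
  ha_ub : ∀ v, (a v : ℝ) ≤ (C * (n : ℝ)) ^ (1 / α)
  hcount_lb : ∀ d : ℕ, 2 ≤ d → (d : ℝ) ≤ (C * (n : ℝ)) ^ (1 / α) →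
    c₁ * C * (n : ℝ) / (d : ℝ) ^ α ≤
      ((Finset.univ.filter (fun v => a v = d)).card : ℝ)
  hcount_ub : ∀ d : ℕ, 2 ≤ d → (d : ℝ) ≤ (C * (n : ℝ)) ^ (1 / α) →
    ((Finset.univ.filter (fun v => a v = d)).card : ℝ) ≤
      c₂ * C * (n : ℝ) / (d : ℝ) ^ α

/- ----------------------------------------------------------------
   Auxiliary lemmas
   ---------------------------------------------------------------- -/

lemma sum_fun_prod {n N : ℕ} (h : Fin n → Fin N → ℝ) :
    ∑ f : Fin n → Fin N, ∏ i, h i (f i) = ∏ i, ∑ x, h i x := by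
  rw [← Fintype.piFinset_univ, Finset.sum_prod_piFinset]

lemma aux_exp2 : Real.exp 2 ≤ 8 := by
  have h := Real.exp_one_lt_d9
  have : Real.exp 2 = Real.exp 1 * Real.exp 1 := by
    rw [← Real.exp_add]; norm_num
  nlinarith [Real.exp_pos 1]

lemma aux_one_sub_pow {n : ℕ} (hn : 2 ≤ n) : (1:ℝ)/8 ≤ (1 - 1/(n:ℝ))^n := by
  have hn1 : (2:ℝ) ≤ n := by exact_mod_cast hn
  have hx : (0:ℝ) < 1 - 1/(n:ℝ) := by
    have : (1:ℝ)/n ≤ 1/2 := by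
      apply div_le_div_of_nonneg_left <;> linarith
    linarith
  have hlog : -2 ≤ (n:ℝ) * Real.log (1 - 1/(n:ℝ)) := by
    have h1 : Real.log (1/(1 - 1/(n:ℝ))) ≤ 1/(1 - 1/(n:ℝ)) - 1 :=
      Real.log_le_sub_one_of_pos (by positivity)
    rw [Real.log_div one_ne_zero (ne_of_gt hx), Real.log_one, zero_sub] at h1
    have he : 1/(1 - 1/(n:ℝ)) - 1 = 1/((n:ℝ)-1) := by
      have hne : (n:ℝ) - 1 ≠ 0 := by linarith
      have hn0 : (n:ℝ) ≠ 0 := by linarith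
      field_simp
      ring
    rw [he] at h1
    have h3 : (n:ℝ) * (1/((n:ℝ)-1)) ≤ 2 := by
      rw [mul_one_div, div_le_iff₀ (by linarith)]
      linarith
    nlinarith [h1, h3, hn1]
  have : (1 - 1/(n:ℝ))^n = Real.exp ((n:ℝ) * Real.log (1 - 1/(n:ℝ))) := by
    rw [Real.exp_nat_mul, Real.exp_log hx]
  rw [this]
  calc (1:ℝ)/8 ≤ Real.exp (-2) := by
        rw [Real.exp_neg, div_le_iff₀ (by positivity), inv_mul_eq_div,
          le_div_iff₀ (Real.exp_pos 2)]
        nlinarith [aux_exp2, Real.exp_pos 2]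
    _ ≤ _ := Real.exp_le_exp.mpr hlog

lemma avoid_prob {n N : ℕ} (p : Fin N → ℝ) (hp : ∑ x, p x = 1)
    (S : Finset (Fin n)) (T : Finset (Fin N)) :
    ∑ f : Fin n → Fin N, (∏ i, p (f i)) * (if ∀ s ∈ S, f s ∉ T then (1:ℝ) else 0)
      = (1 - ∑ x ∈ T, p x) ^ S.card := by
  have key : ∀ f : Fin n → Fin N,
      (∏ i, p (f i)) * (if ∀ s ∈ S, f s ∉ T then (1:ℝ) else 0)
        = ∏ i, (p (f i) * (if i ∈ S ∧ f i ∈ T then 0 else 1)) := by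
    intro f
    rw [Finset.prod_mul_distrib]
    congr 1
    by_cases h : ∀ s ∈ S, f s ∉ T
    · rw [if_pos h, eq_comm]
      apply Finset.prod_eq_one
      intro i _
      rw [if_neg]
      rintro ⟨hi, hfi⟩
      exact h i hi hfi
    · rw [if_neg h]
      push_neg at h
      obtain ⟨s, hs, hfs⟩ := h
      rw [eq_comm]
      apply Finset.prod_eq_zero (Finset.mem_univ s)
      rw [if_pos ⟨hs, hfs⟩]
  simp only [key]
  rw [sum_fun_prod (fun i y => p y * (if i ∈ S ∧ y ∈ T then (0:ℝ) else 1))]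
  have hterm : ∀ i : Fin n, (∑ x, p x * (if i ∈ S ∧ x ∈ T then (0:ℝ) else 1))
      = if i ∈ S then (1 - ∑ x ∈ T, p x) else 1 := by
    intro i
    by_cases hi : i ∈ S
    · rw [if_pos hi]
      have h2 : ∀ x, p x * (if i ∈ S ∧ x ∈ T then (0:ℝ) else 1)
          = p x - (if x ∈ T then p x else 0) := by
        intro x
        by_cases hx : x ∈ T <;> simp [hx, hi]
      simp only [h2]
      rw [Finset.sum_sub_distrib, hp, ← Finset.sum_filter]
      rw [Finset.filter_univ_mem]
    · rw [if_neg hi]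
      have h2 : ∀ x, p x * (if i ∈ S ∧ x ∈ T then (0:ℝ) else 1) = p x := by
        intro x
        simp [hi]
      simp only [h2, hp]
  rw [Finset.prod_congr rfl (fun i _ => hterm i), ← Finset.prod_filter,
    Finset.filter_univ_mem, Finset.prod_const]

lemma avoid_single {n N : ℕ} (p : Fin N → ℝ) (hp : ∑ x, p x = 1)
    (S : Finset (Fin n)) (v : Fin N) :
    ∑ f : Fin n → Fin N, (∏ i, p (f i)) * (if ∀ s ∈ S, f s ≠ v then (1:ℝ) else 0)
      = (1 - p v) ^ S.card := by
  simpa using avoid_prob p hp S {v}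

lemma avoid_pair {n N : ℕ} (p : Fin N → ℝ) (hp : ∑ x, p x = 1)
    (S : Finset (Fin n)) (v w : Fin N) (hvw : v ≠ w) :
    ∑ f : Fin n → Fin N, (∏ i, p (f i)) *
        ((if ∀ s ∈ S, f s ≠ v then (1:ℝ) else 0) * (if ∀ s ∈ S, f s ≠ w then (1:ℝ) else 0))
      = (1 - (p v + p w)) ^ S.card := by
  have h := avoid_prob p hp S {v, w}
  rw [Finset.sum_insert (by simp [hvw]), Finset.sum_singleton] at h
  rw [← h]
  apply Finset.sum_congr rfl
  intro f _
  congr 1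
  by_cases h1 : ∀ s ∈ S, f s ≠ v <;> by_cases h2 : ∀ s ∈ S, f s ≠ w
  · have h3 : ∀ s ∈ S, f s ∉ ({v, w} : Finset (Fin N)) := by
      intro s hs
      simp [h1 s hs, h2 s hs]
    rw [if_pos h1, if_pos h2, if_pos h3, mul_one]
  · have h3 : ¬ ∀ s ∈ S, f s ∉ ({v, w} : Finset (Fin N)) := by
      push_neg at h2 ⊢
      obtain ⟨s, hs, hw⟩ := h2
      exact ⟨s, hs, by simp [hw]⟩
    rw [if_neg h2, if_neg h3, mul_zero]
  · have h3 : ¬ ∀ s ∈ S, f s ∉ ({v, w} : Finset (Fin N)) := by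
      push_neg at h1 ⊢
      obtain ⟨s, hs, hv'⟩ := h1
      exact ⟨s, hs, by simp [hv']⟩
    rw [if_neg h1, if_neg h3, zero_mul]
  · have h3 : ¬ ∀ s ∈ S, f s ∉ ({v, w} : Finset (Fin N)) := by
      push_neg at h1 ⊢
      obtain ⟨s, hs, hv'⟩ := h1
      exact ⟨s, hs, by simp [hv']⟩
    rw [if_neg h1, if_neg h3, zero_mul]

lemma card_as_sum {n N : ℕ} (a : Fin N → ℕ) (S : Finset (Fin n)) (f : Fin n → Fin N) :
    ((Finset.univ.filter (fun v : Fin N => a v = 2 ∧ ∀ s ∈ S, f s ≠ v)).card : ℝ)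
      = ∑ v ∈ Finset.univ.filter (fun v : Fin N => a v = 2),
          (if ∀ s ∈ S, f s ≠ v then (1:ℝ) else 0) := by
  rw [← Finset.filter_filter, Finset.card_filter]
  push_cast
  simp
set_option maxHeartbeats 4000000 in
theorem many_empty_cells (α c₁ c₂ : ℝ) (hα : 2 < α)
    (hc₁ : 0 < c₁) (hc₁₂ : c₁ ≤ c₂) :
    ∃ δ γ : ℝ, 0 < δ ∧ 0 < γ ∧ ∃ n₀ : ℕ, ∀ n : ℕ, n₀ ≤ n →
      ∀ (N : ℕ) (a : Fin N → ℕ), PlacementModel 1 α c₁ c₂ n N a →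
        ∀ S : Finset (Fin n),
          1 - (n : ℝ) ^ (-γ) ≤
            roundProb n a {f |
              δ * (n : ℝ) ≤
                ((Finset.univ.filter (fun v : Fin N =>
                  a v = 2 ∧ ∀ s ∈ S, f s ≠ v)).card : ℝ)} := by
  have hα0 : (0:ℝ) < α := by linarith
  have h2α : (0:ℝ) < (2:ℝ)^α := Real.rpow_pos_of_pos (by norm_num) α
  refine ⟨c₁ / ((2:ℝ)^α * 16), 1/2, by positivity, by norm_num,
    max (max 2 ⌈(2:ℝ)^α⌉₊) ⌈((1/(c₁ / ((2:ℝ)^α * 16))^2)^2 : ℝ)⌉₊, ?_⟩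
  intro n hn N a PM S
  set δ : ℝ := c₁ / ((2:ℝ)^α * 16) with hδdef
  have hδ : 0 < δ := by positivity
  have hNn : N = n := by
    have h := PM.hN
    rw [one_mul, Nat.ceil_natCast] at h
    exact h
  have hNn' : n = N := hNn.symm
  subst hNn'
  -- basic numerics
  have hn2 : 2 ≤ n := le_trans (le_trans (le_max_left 2 _) (le_max_left _ _)) hn
  have hnR : (2:ℝ) ≤ n := by exact_mod_cast hn2
  have hnpos : (0:ℝ) < n := by linarith
  have htwoα : (2:ℝ)^α ≤ n := by
    have h1 : (⌈(2:ℝ)^α⌉₊ : ℝ) ≤ n := by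
      exact_mod_cast le_trans (le_trans (le_max_right 2 _) (le_max_left _ _)) hn
    exact le_trans (Nat.le_ceil _) h1
  have hK : ((1/δ^2)^2 : ℝ) ≤ n := by
    have h1 : (⌈((1/δ^2)^2 : ℝ)⌉₊ : ℝ) ≤ n := by
      exact_mod_cast le_trans (le_max_right _ _) hn
    exact le_trans (Nat.le_ceil _) h1
  have h2rpow : (2:ℝ) ≤ ((1:ℝ) * (n : ℝ)) ^ (1/α) := by
    rw [one_mul]
    have h1 : ((2:ℝ)^α)^(1/α) ≤ (n:ℝ)^(1/α) :=
      Real.rpow_le_rpow (le_of_lt h2α) htwoα (by positivity)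
    rwa [← Real.rpow_mul (by norm_num : (0:ℝ) ≤ 2),
      mul_one_div_cancel (ne_of_gt hα0), Real.rpow_one] at h1
  -- the probability vector
  have hSa : 2 * (n:ℝ) ≤ ∑ w : Fin n, (a w : ℝ) := by
    calc 2*(n:ℝ) = ∑ _w : Fin n, (2:ℝ) := by
          rw [Finset.sum_const, Finset.card_univ, Fintype.card_fin, nsmul_eq_mul]; ring
      _ ≤ _ := Finset.sum_le_sum fun w _ => by exact_mod_cast PM.ha_lb w
  have hSapos : (0:ℝ) < ∑ w : Fin n, (a w : ℝ) := lt_of_lt_of_le (by positivity) hSa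
  have hp0 : ∀ v : Fin n, 0 ≤ cellProb a v := fun v =>
    div_nonneg (Nat.cast_nonneg _) (le_of_lt hSapos)
  have hpsum : ∑ v, cellProb a v = 1 := by
    unfold cellProb
    rw [← Finset.sum_div, div_self (ne_of_gt hSapos)]
  have hple : ∀ v : Fin n, a v = 2 → cellProb a v ≤ 1/(n:ℝ) := by
    intro v hv
    unfold cellProb
    rw [hv, div_le_div_iff₀ hSapos hnpos]
    push_cast
    linarith
  -- the set of attractiveness-2 cells
  set T2 : Finset (Fin n) := Finset.univ.filter (fun v => a v = 2) with hT2
  have hM_ub : (T2.card : ℝ) ≤ n := by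
    have h1 : T2.card ≤ n := by
      calc T2.card ≤ Finset.univ.card := Finset.card_filter_le _ _
        _ = n := by rw [Finset.card_univ, Fintype.card_fin]
    exact_mod_cast h1
  have hM_lb : c₁ * (n:ℝ) / (2:ℝ)^α ≤ (T2.card : ℝ) := by
    have h1 := PM.hcount_lb 2 le_rfl (by push_cast; exact h2rpow)
    rw [mul_one] at h1
    have h2 : (((2:ℕ)):ℝ) = (2:ℝ) := by norm_num
    rw [h2] at h1
    exact h1
  have hs_le : S.card ≤ n := by
    have := Finset.card_le_univ S
    simpa using this
  -- pointwise bounds on avoidance probabilities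
  have hpow8 : ∀ v ∈ T2, (1:ℝ)/8 ≤ (1 - cellProb a v)^S.card := by
    intro v hv
    have hv2 : a v = 2 := by
      rw [hT2, Finset.mem_filter] at hv
      exact hv.2
    have h1 : cellProb a v ≤ 1/(n:ℝ) := hple v hv2
    have hinv : (0:ℝ) < 1/(n:ℝ) := by positivity
    have hinv2 : (1:ℝ)/(n:ℝ) ≤ 1/2 := by
      apply div_le_div_of_nonneg_left <;> linarith
    have h0 : (0:ℝ) ≤ 1 - 1/(n:ℝ) := by linarith
    calc (1:ℝ)/8 ≤ (1 - 1/(n:ℝ))^n := aux_one_sub_pow hn2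
      _ ≤ (1 - 1/(n:ℝ))^S.card := pow_le_pow_of_le_one h0 (by linarith) hs_le
      _ ≤ (1 - cellProb a v)^S.card := pow_le_pow_left₀ h0 (by linarith) _
  have hpow1 : ∀ v ∈ T2, (1 - cellProb a v)^S.card ≤ 1 := by
    intro v hv
    have hv2 : a v = 2 := by
      rw [hT2, Finset.mem_filter] at hv
      exact hv.2
    have h1 : cellProb a v ≤ 1/(n:ℝ) := hple v hv2
    have hinv2 : (1:ℝ)/(n:ℝ) ≤ 1/2 := by
      apply div_le_div_of_nonneg_left <;> linarith
    exact pow_le_one₀ (by linarith) (by linarith [hp0 v])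
  -- mean
  set m : ℝ := ∑ v ∈ T2, (1 - cellProb a v)^S.card with hm
  have hm_lb : 2*(δ*(n:ℝ)) ≤ m := by
    have h8 : (T2.card:ℝ) * (1/8) ≤ m := by
      calc (T2.card:ℝ) * (1/8) = ∑ _v ∈ T2, (1:ℝ)/8 := by
            rw [Finset.sum_const, nsmul_eq_mul]
        _ ≤ m := Finset.sum_le_sum hpow8
    have heq : 2*(δ*(n:ℝ)) = (c₁*(n:ℝ)/(2:ℝ)^α) * (1/8) := by
      rw [hδdef]; field_simp; ring
    rw [heq]
    calc (c₁*(n:ℝ)/(2:ℝ)^α) * (1/8) ≤ (T2.card:ℝ) * (1/8) := by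
          apply mul_le_mul_of_nonneg_right hM_lb (by norm_num)
      _ ≤ m := h8
  -- total mass one, nonneg
  have hmuSum : ∑ f : Fin n → Fin n, (∏ i, cellProb a (f i)) = 1 := by
    rw [sum_fun_prod (fun _ y => cellProb a y)]
    rw [Finset.prod_congr rfl (fun i _ => hpsum), Finset.prod_const, one_pow]
  have hmu0 : ∀ f : Fin n → Fin n, 0 ≤ ∏ i, cellProb a (f i) :=
    fun f => Finset.prod_nonneg fun i _ => hp0 _
  -- first moment
  have hEU : ∑ f : Fin n → Fin n, (∏ i, cellProb a (f i)) *
      ((Finset.univ.filter (fun v : Fin n => a v = 2 ∧ ∀ s ∈ S, f s ≠ v)).card : ℝ) = m := by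
    calc ∑ f : Fin n → Fin n, (∏ i, cellProb a (f i)) *
          ((Finset.univ.filter (fun v : Fin n => a v = 2 ∧ ∀ s ∈ S, f s ≠ v)).card : ℝ)
        = ∑ f : Fin n → Fin n, ∑ v ∈ T2, (∏ i, cellProb a (f i)) *
            (if ∀ s ∈ S, f s ≠ v then (1:ℝ) else 0) := by
          apply Finset.sum_congr rfl
          intro f _
          rw [card_as_sum a S f, ← hT2, Finset.mul_sum]
      _ = ∑ v ∈ T2, ∑ f : Fin n → Fin n, (∏ i, cellProb a (f i)) *
            (if ∀ s ∈ S, f s ≠ v then (1:ℝ) else 0) := Finset.sum_comm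
      _ = ∑ v ∈ T2, (1 - cellProb a v)^S.card :=
          Finset.sum_congr rfl fun v _ => avoid_single (cellProb a) hpsum S v
      _ = m := hm.symm
  -- second moment
  have hEU2 : ∑ f : Fin n → Fin n, (∏ i, cellProb a (f i)) *
      (((Finset.univ.filter (fun v : Fin n => a v = 2 ∧ ∀ s ∈ S, f s ≠ v)).card : ℝ) *
       ((Finset.univ.filter (fun v : Fin n => a v = 2 ∧ ∀ s ∈ S, f s ≠ v)).card : ℝ))
      ≤ m*m + (T2.card : ℝ) := by
    have hswap : ∑ f : Fin n → Fin n, (∏ i, cellProb a (f i)) *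
        (((Finset.univ.filter (fun v : Fin n => a v = 2 ∧ ∀ s ∈ S, f s ≠ v)).card : ℝ) *
         ((Finset.univ.filter (fun v : Fin n => a v = 2 ∧ ∀ s ∈ S, f s ≠ v)).card : ℝ))
        = ∑ v ∈ T2, ∑ w ∈ T2, ∑ f : Fin n → Fin n, (∏ i, cellProb a (f i)) *
            ((if ∀ s ∈ S, f s ≠ v then (1:ℝ) else 0) * (if ∀ s ∈ S, f s ≠ w then (1:ℝ) else 0)) := by
      calc ∑ f : Fin n → Fin n, (∏ i, cellProb a (f i)) *
            (((Finset.univ.filter (fun v : Fin n => a v = 2 ∧ ∀ s ∈ S, f s ≠ v)).card : ℝ) *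
             ((Finset.univ.filter (fun v : Fin n => a v = 2 ∧ ∀ s ∈ S, f s ≠ v)).card : ℝ))
          = ∑ f : Fin n → Fin n, ∑ v ∈ T2, ∑ w ∈ T2, (∏ i, cellProb a (f i)) *
              ((if ∀ s ∈ S, f s ≠ v then (1:ℝ) else 0) *
               (if ∀ s ∈ S, f s ≠ w then (1:ℝ) else 0)) := by
            apply Finset.sum_congr rfl
            intro f _
            rw [card_as_sum a S f, ← hT2, Finset.sum_mul_sum, Finset.mul_sum]
            apply Finset.sum_congr rfl
            intro v _
            rw [Finset.mul_sum]
        _ = ∑ v ∈ T2, ∑ f : Fin n → Fin n, ∑ w ∈ T2, (∏ i, cellProb a (f i)) *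
              ((if ∀ s ∈ S, f s ≠ v then (1:ℝ) else 0) *
               (if ∀ s ∈ S, f s ≠ w then (1:ℝ) else 0)) := Finset.sum_comm
        _ = _ := Finset.sum_congr rfl fun v _ => Finset.sum_comm
    rw [hswap]
    have hbound : ∀ v ∈ T2, ∀ w ∈ T2,
        (∑ f : Fin n → Fin n, (∏ i, cellProb a (f i)) *
          ((if ∀ s ∈ S, f s ≠ v then (1:ℝ) else 0) * (if ∀ s ∈ S, f s ≠ w then (1:ℝ) else 0)))
        ≤ (1 - cellProb a v)^S.card * (1 - cellProb a w)^S.card +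
            (if v = w then (1:ℝ) else 0) := by
      intro v hv w hw
      by_cases hvw : v = w
      · subst hvw
        have hsq : ∀ f : Fin n → Fin n,
            (if ∀ s ∈ S, f s ≠ v then (1:ℝ) else 0) * (if ∀ s ∈ S, f s ≠ v then (1:ℝ) else 0)
              = (if ∀ s ∈ S, f s ≠ v then (1:ℝ) else 0) := by
          intro f
          by_cases h : ∀ s ∈ S, f s ≠ v
          · rw [if_pos h, mul_one]
          · rw [if_neg h, mul_zero]
        simp only [hsq]
        rw [avoid_single (cellProb a) hpsum S v]
        have h1 := hpow1 v hv
        have h8 := hpow8 v hv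
        have hone : (if v = v then (1:ℝ) else 0) = 1 := by simp
        have hone2 : (if True then (1:ℝ) else 0) = 1 := by simp
        nlinarith [hone, hone2]
      · rw [avoid_pair (cellProb a) hpsum S v w hvw, if_neg hvw, add_zero, ← mul_pow]
        have hv2 : a v = 2 := by rw [hT2, Finset.mem_filter] at hv; exact hv.2
        have hw2 : a w = 2 := by rw [hT2, Finset.mem_filter] at hw; exact hw.2
        have h1 := hple v hv2
        have h2 := hple w hw2
        have hinv2 : (1:ℝ)/(n:ℝ) ≤ 1/2 := by
          apply div_le_div_of_nonneg_left <;> linarith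
        apply pow_le_pow_left₀ (by linarith)
        nlinarith [hp0 v, hp0 w]
    calc ∑ v ∈ T2, ∑ w ∈ T2, ∑ f : Fin n → Fin n, (∏ i, cellProb a (f i)) *
          ((if ∀ s ∈ S, f s ≠ v then (1:ℝ) else 0) * (if ∀ s ∈ S, f s ≠ w then (1:ℝ) else 0))
        ≤ ∑ v ∈ T2, ∑ w ∈ T2, ((1 - cellProb a v)^S.card * (1 - cellProb a w)^S.card +
            (if v = w then (1:ℝ) else 0)) := by
          apply Finset.sum_le_sum
          intro v hv
          apply Finset.sum_le_sum
          intro w hw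
          exact hbound v hv w hw
      _ = m*m + (T2.card : ℝ) := by
          simp only [Finset.sum_add_distrib]
          rw [← Finset.sum_mul_sum, ← hm]
          congr 1
          have hdiag : ∀ v ∈ T2, ∑ w ∈ T2, (if v = w then (1:ℝ) else 0) = 1 := by
            intro v hv
            rw [Finset.sum_ite_eq T2 v (fun _ => (1:ℝ))]
            exact if_pos hv
          rw [Finset.sum_congr rfl hdiag, Finset.sum_const, nsmul_eq_mul, mul_one]
  -- variance bound
  have hVar : ∑ f : Fin n → Fin n, (∏ i, cellProb a (f i)) *
      (((Finset.univ.filter (fun v : Fin n => a v = 2 ∧ ∀ s ∈ S, f s ≠ v)).card : ℝ) - m)^2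
      ≤ (n : ℝ) := by
    have expand : ∀ f : Fin n → Fin n, (∏ i, cellProb a (f i)) *
        (((Finset.univ.filter (fun v : Fin n => a v = 2 ∧ ∀ s ∈ S, f s ≠ v)).card : ℝ) - m)^2
        = (∏ i, cellProb a (f i)) *
            (((Finset.univ.filter (fun v : Fin n => a v = 2 ∧ ∀ s ∈ S, f s ≠ v)).card : ℝ) *
             ((Finset.univ.filter (fun v : Fin n => a v = 2 ∧ ∀ s ∈ S, f s ≠ v)).card : ℝ))
          - (2*m) * ((∏ i, cellProb a (f i)) *
            ((Finset.univ.filter (fun v : Fin n => a v = 2 ∧ ∀ s ∈ S, f s ≠ v)).card : ℝ))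
          + (m^2) * (∏ i, cellProb a (f i)) := by
      intro f
      ring
    rw [Finset.sum_congr rfl (fun f _ => expand f), Finset.sum_add_distrib,
      Finset.sum_sub_distrib, ← Finset.mul_sum, ← Finset.mul_sum, hEU, hmuSum, mul_one]
    have : c₁ * (n:ℝ) / (2:ℝ)^α ≤ (T2.card : ℝ) := hM_lb
    linarith [hEU2, hM_ub]
  -- Chebyshev
  unfold roundProb
  simp only [Set.indicator_apply, Set.mem_setOf_eq]
  have hsplit : ∑ f : Fin n → Fin n,
      (if δ*(n:ℝ) ≤ ((Finset.univ.filter (fun v : Fin n => a v = 2 ∧ ∀ s ∈ S, f s ≠ v)).card : ℝ)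
        then (∏ i, cellProb a (f i)) else 0)
      = 1 - ∑ f : Fin n → Fin n,
        (if δ*(n:ℝ) ≤ ((Finset.univ.filter (fun v : Fin n => a v = 2 ∧ ∀ s ∈ S, f s ≠ v)).card : ℝ)
          then 0 else (∏ i, cellProb a (f i))) := by
    have h : ∀ f : Fin n → Fin n,
        (if δ*(n:ℝ) ≤ ((Finset.univ.filter (fun v : Fin n => a v = 2 ∧ ∀ s ∈ S, f s ≠ v)).card : ℝ)
          then (∏ i, cellProb a (f i)) else 0)
        = (∏ i, cellProb a (f i)) -
          (if δ*(n:ℝ) ≤ ((Finset.univ.filter (fun v : Fin n => a v = 2 ∧ ∀ s ∈ S, f s ≠ v)).card : ℝ)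
            then 0 else (∏ i, cellProb a (f i))) := by
      intro f
      by_cases h : δ*(n:ℝ) ≤ ((Finset.univ.filter (fun v : Fin n => a v = 2 ∧ ∀ s ∈ S, f s ≠ v)).card : ℝ) <;>
        simp [h]
    rw [Finset.sum_congr rfl (fun f _ => h f), Finset.sum_sub_distrib, hmuSum]
  have hbad : ∑ f : Fin n → Fin n,
      (if δ*(n:ℝ) ≤ ((Finset.univ.filter (fun v : Fin n => a v = 2 ∧ ∀ s ∈ S, f s ≠ v)).card : ℝ)
        then 0 else (∏ i, cellProb a (f i)))
      ≤ (∑ f : Fin n → Fin n, (∏ i, cellProb a (f i)) *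
          (((Finset.univ.filter (fun v : Fin n => a v = 2 ∧ ∀ s ∈ S, f s ≠ v)).card : ℝ) - m)^2)
        / (δ*(n:ℝ))^2 := by
    rw [Finset.sum_div]
    apply Finset.sum_le_sum
    intro f _
    by_cases h : δ*(n:ℝ) ≤ ((Finset.univ.filter (fun v : Fin n => a v = 2 ∧ ∀ s ∈ S, f s ≠ v)).card : ℝ)
    · rw [if_pos h]
      exact div_nonneg (mul_nonneg (hmu0 f) (sq_nonneg _)) (by positivity)
    · rw [if_neg h]
      push_neg at h
      have h1 : δ*(n:ℝ) ≤ m - ((Finset.univ.filter (fun v : Fin n => a v = 2 ∧ ∀ s ∈ S, f s ≠ v)).card : ℝ) := by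
        linarith [hm_lb]
      have h2 : (δ*(n:ℝ))^2 ≤ (((Finset.univ.filter (fun v : Fin n => a v = 2 ∧ ∀ s ∈ S, f s ≠ v)).card : ℝ) - m)^2 := by
        have h3 := pow_le_pow_left₀ (le_of_lt (mul_pos hδ hnpos)) h1 2
        calc (δ*(n:ℝ))^2 ≤ (m - ((Finset.univ.filter (fun v : Fin n => a v = 2 ∧ ∀ s ∈ S, f s ≠ v)).card : ℝ))^2 := h3
          _ = (((Finset.univ.filter (fun v : Fin n => a v = 2 ∧ ∀ s ∈ S, f s ≠ v)).card : ℝ) - m)^2 := by ring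
      rw [le_div_iff₀ (by positivity)]
      exact mul_le_mul_of_nonneg_left h2 (hmu0 f)
  have hfinal : (∑ f : Fin n → Fin n, (∏ i, cellProb a (f i)) *
        (((Finset.univ.filter (fun v : Fin n => a v = 2 ∧ ∀ s ∈ S, f s ≠ v)).card : ℝ) - m)^2)
      / (δ*(n:ℝ))^2 ≤ (n:ℝ) ^ (-(1/2) : ℝ) := by
    have hroot : (0:ℝ) < (n:ℝ)^((1/2):ℝ) := Real.rpow_pos_of_pos hnpos _
    have hnsplit : (n:ℝ)^((1/2):ℝ) * (n:ℝ)^((1/2):ℝ) = n := by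
      rw [← Real.rpow_add hnpos]
      norm_num
    have hKs : 1/δ^2 ≤ (n:ℝ)^((1/2):ℝ) := by
      have h0 : (0:ℝ) ≤ 1/δ^2 := by positivity
      have h1 := Real.rpow_le_rpow (by positivity) hK (by norm_num : (0:ℝ) ≤ 1/2)
      have heq : (((1/δ^2)^2 : ℝ))^((1/2):ℝ) = 1/δ^2 := by
        rw [← Real.rpow_natCast (1/δ^2) 2, ← Real.rpow_mul h0]
        norm_num
      rwa [heq] at h1
    have h1 : 1 ≤ (n:ℝ)^((1/2):ℝ) * δ^2 := (div_le_iff₀ (by positivity)).mp hKs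
    calc (∑ f : Fin n → Fin n, (∏ i, cellProb a (f i)) *
          (((Finset.univ.filter (fun v : Fin n => a v = 2 ∧ ∀ s ∈ S, f s ≠ v)).card : ℝ) - m)^2)
        / (δ*(n:ℝ))^2 ≤ (n:ℝ) / (δ*(n:ℝ))^2 := by
          rw [div_le_div_iff₀ (by positivity) (by positivity)]
          exact mul_le_mul_of_nonneg_right hVar (by positivity)
      _ ≤ (n:ℝ) ^ (-(1/2) : ℝ) := by
          rw [Real.rpow_neg (le_of_lt hnpos), ← one_div]
          rw [div_le_div_iff₀ (by positivity) hroot]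
          have e1 : (δ*(n:ℝ))^2 = δ^2 * ((n:ℝ)^((1/2):ℝ))^4 := by
            linear_combination (-(δ^2) * ((n:ℝ) + ((n:ℝ)^((1/2):ℝ))^2)) * hnsplit
          have e2 : (n:ℝ) * (n:ℝ)^((1/2):ℝ) = ((n:ℝ)^((1/2):ℝ))^3 := by
            linear_combination (-((n:ℝ)^((1/2):ℝ))) * hnsplit
          have h2 : ((n:ℝ)^((1/2):ℝ))^3 * 1 ≤ ((n:ℝ)^((1/2):ℝ))^3 * ((n:ℝ)^((1/2):ℝ) * δ^2) :=
            mul_le_mul_of_nonneg_left h1 (by positivity)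
          rw [e1, e2]
          nlinarith [h2]
  linarith [hsplit, hbad, hfinal]
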